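/- arXiv:1501.06320 — 7 statements merged into one kernel-verified Lean document; each statement's English description precedes it below -/
import Mathlib

section
/- If a graph H is not bipartite, then for any graph F with maximum degree at most 2Δ(H)−1, there exists a 2-coloring of the edges of F with no monochromatic copy of H. In other words, every Ramsey graph for a non-bipartite graph H has maximum degree at least 2Δ(H). -/
open SimpleGraph

/-- `H` has a copy (injective homomorphism image) in `G`. -/
def Contains {V W : Type*} (G : SimpleGraph V) (H : SimpleGraph W) : Prop :=
  ∃ f : W → V, Function.Injective f ∧ ∀ a b, H.Adj a b → G.Adj (f a) (f b)

/-- There is a copy of `H` in `G` all of whose edges get color `b` under the 2-coloring `c`. -/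
def IsMonoCopyIn {V W : Type*} (H : SimpleGraph W) (G : SimpleGraph V)
    (c : Sym2 V → Bool) (b : Bool) : Prop :=
  ∃ f : W → V, Function.Injective f ∧
    ∀ a a', H.Adj a a' → G.Adj (f a) (f a') ∧ c s(f a, f a') = b

/-- `G` arrows `H`: every 2-coloring of the edges of `G` has a monochromatic copy of `H`. -/
def Arrows {V W : Type*} (G : SimpleGraph V) (H : SimpleGraph W) : Prop :=
  ∀ c : Sym2 V → Bool, ∃ b, IsMonoCopyIn H G c b

/-- The Turán extremal number: the largest number of edges of an `n`-vertex `H`-free graph. -/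
noncomputable def exNum {W : Type*} (n : ℕ) (H : SimpleGraph W) : ℕ :=
  sSup {m | ∃ G : SimpleGraph (Fin n), ¬ Contains G H ∧ G.edgeSet.ncard = m}

open SimpleGraph Finset

section
open scoped Classical
variable {V : Type*} [Fintype V] (F : SimpleGraph V) [DecidableRel F.Adj]

noncomputable def cutN (s : Finset V) : ℕ := ∑ v ∈ s, (F.neighborFinset v \ s).card

lemma erase_cut (s : Finset V) (v : V) (hv : v ∈ s) :
    cutN F (s.erase v) + (F.neighborFinset v \ s).card
      = cutN F s + (F.neighborFinset v ∩ s).card := by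
  have key : ∀ u ∈ s.erase v, (F.neighborFinset u \ s.erase v).card
      = (F.neighborFinset u \ s).card + (F.neighborFinset u ∩ {v}).card := by
    intro u hu
    have h1 : s.erase v = s \ {v} := by
      ext x; simp [Finset.mem_erase, and_comm]
    rw [h1, sdiff_sdiff_right']
    rw [sup_eq_union, inf_eq_inter, Finset.card_union_of_disjoint]
    · refine Finset.disjoint_left.mpr fun x hx hx' => ?_
      simp only [Finset.mem_sdiff] at hx
      simp only [Finset.mem_inter, Finset.mem_singleton] at hx'
      exact hx.2 (hx'.2 ▸ hv)
  have h2 : cutN F (s.erase v) = (∑ u ∈ s.erase v, (F.neighborFinset u \ s).card)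
      + ∑ u ∈ s.erase v, (F.neighborFinset u ∩ {v}).card := by
    rw [cutN, Finset.sum_congr rfl key, Finset.sum_add_distrib]
  have h3 : (∑ u ∈ s.erase v, (F.neighborFinset u \ s).card) + (F.neighborFinset v \ s).card
      = cutN F s := by
    rw [cutN, ← Finset.sum_erase_add s _ hv]
  have h4 : ∑ u ∈ s.erase v, (F.neighborFinset u ∩ {v}).card
      = (F.neighborFinset v ∩ s).card := by
    have : ∀ u ∈ s.erase v, (F.neighborFinset u ∩ {v}).card
        = if F.Adj u v then 1 else 0 := by
      intro u _
      by_cases h : F.Adj u v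
      · rw [if_pos h]
        have : F.neighborFinset u ∩ {v} = {v} := by
          ext x; simp only [Finset.mem_inter, Finset.mem_singleton, mem_neighborFinset]
          constructor
          · exact fun h => h.2
          · rintro rfl; exact ⟨h, rfl⟩
        rw [this, Finset.card_singleton]
      · rw [if_neg h]
        have : F.neighborFinset u ∩ {v} = ∅ := by
          ext x; simp only [Finset.mem_inter, Finset.mem_singleton, mem_neighborFinset,
            Finset.notMem_empty, iff_false, not_and]
          rintro ha rfl; exact h ha
        rw [this, Finset.card_empty]
    rw [Finset.sum_congr rfl this, ← Finset.card_filter]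
    congr 1
    ext x
    simp only [Finset.mem_filter, Finset.mem_erase, Finset.mem_inter, mem_neighborFinset]
    constructor
    · rintro ⟨⟨hne, hx⟩, hadj⟩; exact ⟨hadj.symm, hx⟩
    · rintro ⟨hadj, hx⟩; exact ⟨⟨fun h => F.irrefl (h ▸ hadj), hx⟩, hadj.symm⟩
  omega

lemma insert_cut (s : Finset V) (v : V) (hv : v ∉ s) :
    cutN F (insert v s) + (F.neighborFinset v ∩ s).card
      = cutN F s + (F.neighborFinset v \ s).card := by
  have h0 : insert v s ≠ s := fun h => hv (h ▸ Finset.mem_insert_self v s)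
  have h1 : (insert v s).erase v = s := Finset.erase_insert hv
  have := erase_cut F (insert v s) v (Finset.mem_insert_self v s)
  rw [h1] at this
  have h2 : F.neighborFinset v \ insert v s = F.neighborFinset v \ s := by
    ext x
    simp only [Finset.mem_sdiff, Finset.mem_insert, mem_neighborFinset, not_or]
    constructor
    · rintro ⟨ha, _, hx⟩; exact ⟨ha, hx⟩
    · rintro ⟨ha, hx⟩; exact ⟨ha, fun h => F.irrefl (h ▸ ha), hx⟩
  have h3 : F.neighborFinset v ∩ insert v s = F.neighborFinset v ∩ s := by
    ext x
    simp only [Finset.mem_inter, Finset.mem_insert, mem_neighborFinset]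
    constructor
    · rintro ⟨ha, h | hx⟩
      · exact absurd (h ▸ ha) (F.irrefl)
      · exact ⟨ha, hx⟩
    · rintro ⟨ha, hx⟩; exact ⟨ha, Or.inr hx⟩
  rw [h2, h3] at this
  omega

lemma maxcut_sameSide (s : Finset V) (hs : ∀ t, cutN F t ≤ cutN F s) (v : V) :
    2 * ((F.neighborFinset v).filter (fun u => ((u ∈ s) ↔ (v ∈ s)))).card ≤ F.degree v := by
  have hsplit : ((F.neighborFinset v ∩ s).card + (F.neighborFinset v \ s).card)
      = F.degree v := by
    rw [Finset.card_inter_add_card_sdiff, card_neighborFinset_eq_degree]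
  by_cases hv : v ∈ s
  · have heq : (F.neighborFinset v).filter (fun u => ((u ∈ s) ↔ (v ∈ s)))
        = F.neighborFinset v ∩ s := by
      ext x; simp [hv]
    have := erase_cut F s v hv
    have hle := hs (s.erase v)
    rw [heq]
    omega
  · have heq : (F.neighborFinset v).filter (fun u => ((u ∈ s) ↔ (v ∈ s)))
        = F.neighborFinset v \ s := by
      ext x; simp [hv]
    have := insert_cut F s v hv
    have hle := hs (insert v s)
    rw [heq]
    omega

end

lemma not_colorable_two_exists_adj {W : Type*} (H : SimpleGraph W) (hH : ¬ H.Colorable 2) :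
    ∃ a b, H.Adj a b := by
  by_contra h
  push_neg at h
  exact hH ⟨SimpleGraph.Coloring.mk (fun _ => (0 : Fin 2)) (fun {a b} hab => absurd hab (h a b))⟩


/-- If `H` is not bipartite, then any graph `F` with maximum degree at most
`2·Δ(H) − 1` admits a 2-edge-coloring with no monochromatic copy of `H`;
hence every Ramsey graph of a non-bipartite `H` has maximum degree at least `2·Δ(H)`. -/
theorem stmt0 {V W : Type*} [Fintype V] [Fintype W]
    (H : SimpleGraph W) (F : SimpleGraph V)
    [DecidableRel H.Adj] [DecidableRel F.Adj]
    (hH : ¬ H.Colorable 2) (hF : F.maxDegree ≤ 2 * H.maxDegree - 1) :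
    (∃ c : Sym2 V → Bool, ∀ b, ¬ IsMonoCopyIn H F c b) ∧ ¬ Arrows F H := by
  classical
  obtain ⟨s, -, hs⟩ := Finset.exists_max_image (Finset.univ : Finset (Finset V)) (cutN F)
    ⟨∅, Finset.mem_univ _⟩
  have hs' : ∀ t, cutN F t ≤ cutN F s := fun t => hs t (Finset.mem_univ t)
  obtain ⟨a0, b0, hab⟩ := not_colorable_two_exists_adj H hH
  have hW : Nonempty W := ⟨a0⟩
  have hΔ : 1 ≤ H.maxDegree := by
    have h1 : 0 < H.degree a0 := by
      rw [← card_neighborFinset_eq_degree]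
      exact Finset.card_pos.mpr ⟨b0, (mem_neighborFinset _ _ _).mpr hab⟩
    exact le_trans h1 (H.degree_le_maxDegree a0)
  set c : Sym2 V → Bool := Sym2.lift ⟨fun a b => decide ((a ∈ s) ↔ (b ∈ s)),
    fun a b => by simp [Iff.comm]⟩ with hc
  have hcval : ∀ x y : V, c s(x, y) = decide ((x ∈ s) ↔ (y ∈ s)) := fun x y => rfl
  have hmono : ∀ b, ¬ IsMonoCopyIn H F c b := by
    intro b hb
    obtain ⟨f, hf, hcopy⟩ := hb
    cases b with
    | false =>
      apply hH
      refine ⟨SimpleGraph.Coloring.mk (fun w => if f w ∈ s then 0 else 1) ?_⟩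
      intro a a' haa' h
      obtain ⟨-, hcol⟩ := hcopy a a' haa'
      rw [hcval] at hcol
      have hne : ¬ ((f a ∈ s) ↔ (f a' ∈ s)) := by simpa using hcol
      by_cases h1 : f a ∈ s <;> by_cases h2 : f a' ∈ s <;> simp_all
    | true =>
      obtain ⟨w0, hw0⟩ := H.exists_maximal_degree_vertex
      have hsub : (H.neighborFinset w0).image f ⊆
          (F.neighborFinset (f w0)).filter (fun u => (u ∈ s) ↔ (f w0 ∈ s)) := by
        intro x hx
        obtain ⟨w', hw', rfl⟩ := Finset.mem_image.mp hx
        rw [mem_neighborFinset] at hw'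
        obtain ⟨hadj, hcol⟩ := hcopy w0 w' hw'
        rw [hcval] at hcol
        have hiff : ((f w0 ∈ s) ↔ (f w' ∈ s)) := by simpa using hcol
        exact Finset.mem_filter.mpr ⟨(mem_neighborFinset _ _ _).mpr hadj, hiff.symm⟩
      have hcard : H.maxDegree ≤
          ((F.neighborFinset (f w0)).filter (fun u => (u ∈ s) ↔ (f w0 ∈ s))).card := by
        calc H.maxDegree = (H.neighborFinset w0).card := by
              rw [card_neighborFinset_eq_degree, hw0]
          _ = ((H.neighborFinset w0).image f).card :=
              (Finset.card_image_of_injective _ hf).symm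
          _ ≤ _ := Finset.card_le_card hsub
      have h2 := maxcut_sameSide F s hs' (f w0)
      have h3 : F.degree (f w0) ≤ F.maxDegree := F.degree_le_maxDegree _
      omega
  exact ⟨⟨c, hmono⟩, fun hA => by obtain ⟨b, hb⟩ := hA c; exact hmono b hb⟩
end

section
/- Every 2-coloring of the edges of the complete bipartite graph K_{5,5} contains a monochromatic copy of C_4 (the cycle on 4 vertices, equivalently K_{2,2}). -/
open SimpleGraph

/-- Among 5 booleans, some value occurs at least three times. -/
lemma three_of_five : ∀ h : Fin 5 → Bool,
    ∃ b, ∃ x y z : Fin 5, x ≠ y ∧ x ≠ z ∧ y ≠ z ∧ h x = b ∧ h y = b ∧ h z = b := by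
  decide

lemma rowlem : ∀ r : Fin 3 → Bool,
    (∃ k l : Fin 3, k ≠ l ∧ r k = true ∧ r l = true) ∨
    (∃ k l : Fin 3, k < l ∧ r k = false ∧ r l = false) := by
  decide

/-- The key combinatorial fact for a 4×3 boolean grid. -/
lemma key (g : Fin 4 → Fin 3 → Bool) :
    (∃ i, ∃ k l : Fin 3, k ≠ l ∧ g i k = true ∧ g i l = true) ∨
    (∃ i j : Fin 4, i ≠ j ∧ ∃ k l : Fin 3, k ≠ l ∧
      g i k = false ∧ g i l = false ∧ g j k = false ∧ g j l = false) := by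
  by_cases h : ∃ i, ∃ k l : Fin 3, k ≠ l ∧ g i k = true ∧ g i l = true
  · exact Or.inl h
  · right
    push_neg at h
    have hq : ∀ i : Fin 4, ∃ p : {p : Fin 3 × Fin 3 // p.1 < p.2},
        g i p.1.1 = false ∧ g i p.1.2 = false := by
      intro i
      rcases rowlem (g i) with ⟨k, l, hkl, h1, h2⟩ | ⟨k, l, hkl, h1, h2⟩
      · exact absurd h2 (by simpa [h1] using h i k l hkl)
      · exact ⟨⟨(k, l), hkl⟩, h1, h2⟩
    choose q hq1 hq2 using hq
    have hcard : Fintype.card {p : Fin 3 × Fin 3 // p.1 < p.2} < Fintype.card (Fin 4) := by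
      simp only [Fintype.card_fin]
      decide
    obtain ⟨i, j, hij, hqij⟩ := Fintype.exists_ne_map_eq_of_card_lt q hcard
    refine ⟨i, j, hij, (q i).1.1, (q i).1.2, ne_of_lt (q i).2, hq1 i, hq2 i, ?_, ?_⟩
    · rw [hqij]; exact hq1 j
    · rw [hqij]; exact hq2 j

/-- Build a monochromatic `K_{2,2}` copy from two left and two right vertices. -/
lemma mk_copy (c : Sym2 (Fin 5 ⊕ Fin 5) → Bool) (b : Bool)
    (a1 a2 w1 w2 : Fin 5) (ha : a1 ≠ a2) (hw : w1 ≠ w2)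
    (h11 : c s(Sum.inl a1, Sum.inr w1) = b) (h12 : c s(Sum.inl a1, Sum.inr w2) = b)
    (h21 : c s(Sum.inl a2, Sum.inr w1) = b) (h22 : c s(Sum.inl a2, Sum.inr w2) = b) :
    IsMonoCopyIn (completeBipartiteGraph (Fin 2) (Fin 2))
      (completeBipartiteGraph (Fin 5) (Fin 5)) c b := by
  refine ⟨Sum.map (fun i => if i = 0 then a1 else a2) (fun i => if i = 0 then w1 else w2),
    ?_, ?_⟩
  · rintro (x | x) (y | y) h <;> simp only [Sum.map_inl, Sum.map_inr,
      Sum.inl.injEq, Sum.inr.injEq] at h <;>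
      congr 1 <;> fin_cases x <;> fin_cases y <;> simp_all
  · rintro (x | x) (y | y) h
    · simp at h
    · refine ⟨by simp, ?_⟩
      fin_cases x <;> fin_cases y <;> simp_all
    · refine ⟨by simp, ?_⟩
      rw [Sym2.eq_swap]
      fin_cases x <;> fin_cases y <;> simp_all
    · simp at h

/-- Every 2-coloring of the edges of `K_{5,5}` contains a monochromatic copy of
`C₄ = K_{2,2}`. -/
theorem stmt5 :
    Arrows (completeBipartiteGraph (Fin 5) (Fin 5))
      (completeBipartiteGraph (Fin 2) (Fin 2)) := by
  intro c
  obtain ⟨b, x, y, z, hxy, hxz, hyz, hx, hy, hz⟩ :=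
    three_of_five (fun w => c s(Sum.inl 0, Sum.inr w))
  have hpne : ∀ k l : Fin 3, k ≠ l → ![x, y, z] k ≠ ![x, y, z] l := by
    intro k l hkl
    fin_cases k <;> fin_cases l <;> first | assumption | exact Ne.symm (by assumption) | simp_all
  have hb0 : ∀ k : Fin 3, c s(Sum.inl 0, Sum.inr (![x, y, z] k)) = b := by
    intro k
    fin_cases k
    · exact hx
    · exact hy
    · exact hz
  rcases key (fun i k => c s(Sum.inl (i : Fin 4).succ, Sum.inr (![x, y, z] k)) == b) with
    ⟨i, k, l, hkl, h1, h2⟩ | ⟨i, j, hij, k, l, hkl, h1, h2, h3, h4⟩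
  · simp only [beq_iff_eq] at h1 h2
    exact ⟨b, mk_copy c b 0 i.succ (![x, y, z] k) (![x, y, z] l) (Fin.succ_ne_zero i).symm (hpne k l hkl)
      (hb0 k) (hb0 l) h1 h2⟩
  · simp only [beq_eq_false_iff_ne, ne_eq] at h1 h2 h3 h4
    have hb : ∀ v : Bool, v ≠ b → v = !b := by intro v; cases b <;> cases v <;> simp
    exact ⟨!b, mk_copy c (!b) i.succ j.succ (![x, y, z] k) (![x, y, z] l)
      (fun hh => hij (Fin.succ_injective _ hh)) (hpne k l hkl)
      (hb _ h1) (hb _ h2) (hb _ h3) (hb _ h4)⟩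
end

section
/- Every 2-coloring of the edges of the complete bipartite graph K_{12,12} contains a monochromatic copy of K_{2,3}. -/
open SimpleGraph

open Finset

lemma pairBound (f : Fin 12 → Bool) :
    60 ≤ (univ.filter fun p : Fin 12 × Fin 12 => p.1 ≠ p.2 ∧ f p.1 = f p.2).card := by
  classical
  set A := univ.filter (fun v : Fin 12 => f v = true) with hA
  set B := univ.filter (fun v : Fin 12 => f v = false) with hB
  have hrs : A.card + B.card = 12 := by
    simpa using Finset.card_filter_add_card_filter_not
      (s := (univ : Finset (Fin 12))) (p := fun v => f v = true)
  have hset : (univ.filter fun p : Fin 12 × Fin 12 => p.1 ≠ p.2 ∧ f p.1 = f p.2)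
      = A.offDiag ∪ B.offDiag := by
    ext p
    simp only [mem_filter, mem_univ, true_and, mem_union, Finset.mem_offDiag, hA, hB]
    constructor
    · rintro ⟨hne, heq⟩
      cases hfa : f p.1
      · right; simp_all
      · left; simp_all
    · rintro (⟨h1, h2, h3⟩ | ⟨h1, h2, h3⟩) <;> simp_all
  have hdisj : Disjoint A.offDiag B.offDiag := by
    rw [Finset.disjoint_left]
    rintro p hp hq
    rw [Finset.mem_offDiag] at hp hq
    have h1 := hp.1; have h2 := hq.1
    simp [hA, hB] at h1 h2
    simp_all
  rw [hset, Finset.card_union_of_disjoint hdisj, Finset.offDiag_card, Finset.offDiag_card]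
  have key : ∀ r s : ℕ, r + s = 12 → 60 ≤ (r*r - r) + (s*s - s) := by
    intro r s h
    have hr : r ≤ 12 := by omega
    have hs : s ≤ 12 := by omega
    interval_cases r <;> interval_cases s <;> omega
  exact key _ _ hrs

lemma buildCopy (c : Sym2 (Fin 12 ⊕ Fin 12) → Bool) (b : Bool) (v w u₁ u₂ u₃ : Fin 12)
    (hvw : v ≠ w) (h12 : u₁ ≠ u₂) (h13 : u₁ ≠ u₃) (h23 : u₂ ≠ u₃)
    (hc : ∀ j : Fin 3, ∀ i : Fin 2,
      c s(Sum.inl (![u₁, u₂, u₃] j), Sum.inr (![v, w] i)) = b) :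
    IsMonoCopyIn (completeBipartiteGraph (Fin 2) (Fin 3))
      (completeBipartiteGraph (Fin 12) (Fin 12)) c b := by
  refine ⟨Sum.elim (fun i => Sum.inr (![v, w] i)) (fun j => Sum.inl (![u₁, u₂, u₃] j)), ?_, ?_⟩
  · rintro (i | j) (i' | j') h
    · simp only [Sum.elim_inl, Sum.inr.injEq] at h
      congr 1
      fin_cases i <;> fin_cases i' <;> simp_all
    · simp at h
    · simp at h
    · simp only [Sum.elim_inr, Sum.inl.injEq] at h
      congr 1
      fin_cases j <;> fin_cases j' <;> simp_all
  · rintro (i | j) (i' | j') hadj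
    · simp at hadj
    · refine ⟨by simp, ?_⟩
      rw [Sym2.eq_swap]
      exact hc j' i
    · exact ⟨by simp, hc j i'⟩
    · simp at hadj

/-- Every 2-coloring of the edges of `K_{12,12}` contains a monochromatic copy of
`K_{2,3}`. -/
theorem stmt6 :
    Arrows (completeBipartiteGraph (Fin 12) (Fin 12))
      (completeBipartiteGraph (Fin 2) (Fin 3)) := by
  intro c
  by_contra hcon
  push_neg at hcon
  classical
  set T : Finset (Fin 12 × Fin 12 × Fin 12) :=
    univ.filter fun x => x.2.1 ≠ x.2.2 ∧
      c s(Sum.inl x.1, Sum.inr x.2.1) = c s(Sum.inl x.1, Sum.inr x.2.2) with hT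
  -- lower bound
  have hlow : 720 ≤ T.card := by
    have hfibeq : T.card = ∑ u : Fin 12, (T.filter fun x => x.1 = u).card :=
      Finset.card_eq_sum_card_fiberwise (fun x _ => mem_univ x.1)
    have hfib : ∀ u : Fin 12, 60 ≤ (T.filter fun x => x.1 = u).card := by
      intro u
      have := pairBound (fun v => c s(Sum.inl u, Sum.inr v))
      refine le_trans this (Finset.card_le_card_of_injOn (fun p => (u, p)) ?_ ?_)
      · intro p hp
        simp only [Finset.mem_coe, mem_filter, mem_univ, true_and] at hp
        simp only [Finset.mem_coe, hT, mem_filter, mem_univ, true_and]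
        exact ⟨⟨hp.1, hp.2⟩, trivial⟩
      · intro p _ q _ h
        simpa using congrArg Prod.snd h
    calc (720 : ℕ) = ∑ _u : Fin 12, 60 := by simp
      _ ≤ ∑ u : Fin 12, (T.filter fun x => x.1 = u).card :=
          Finset.sum_le_sum fun u _ => hfib u
      _ = T.card := hfibeq.symm
  -- upper bound
  have hup : T.card ≤ 576 := by
    set φ : Fin 12 × Fin 12 × Fin 12 → Fin 12 × Fin 12 × Bool :=
      fun x => (x.2.1, x.2.2, c s(Sum.inl x.1, Sum.inr x.2.1)) with hφ
    have hbound : ∀ a ∈ T.image φ, (T.filter fun x => φ x = a).card ≤ 2 := by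
      rintro ⟨v, w, b⟩ _
      by_contra hlt
      push_neg at hlt
      rw [show (2 < (T.filter fun x => φ x = (v, w, b)).card) ↔ _ from Finset.two_lt_card]
          at hlt
      obtain ⟨x, hx, y, hy, z, hz, hxy, hxz, hyz⟩ := hlt
      simp only [mem_filter, hT, mem_univ, true_and, hφ, Prod.mk.injEq] at hx hy hz
      obtain ⟨⟨hxne, hxc⟩, hxv, hxw, hxb⟩ := hx
      obtain ⟨⟨hyne, hyc⟩, hyv, hyw, hyb⟩ := hy
      obtain ⟨⟨hzne, hzc⟩, hzv, hzw, hzb⟩ := hz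
      have hvw : v ≠ w := by rw [← hxv, ← hxw]; exact hxne
      have h12 : x.1 ≠ y.1 := fun h => hxy (Prod.ext h (Prod.ext (hxv.trans hyv.symm) (hxw.trans hyw.symm)))
      have h13 : x.1 ≠ z.1 := fun h => hxz (Prod.ext h (Prod.ext (hxv.trans hzv.symm) (hxw.trans hzw.symm)))
      have h23 : y.1 ≠ z.1 := fun h => hyz (Prod.ext h (Prod.ext (hyv.trans hzv.symm) (hyw.trans hzw.symm)))
      refine hcon b (buildCopy c b v w x.1 y.1 z.1 hvw h12 h13 h23 ?_)
      intro j i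
      have cx1 : c s(Sum.inl x.1, Sum.inr v) = b := by rw [← hxv]; exact hxb
      have cx2 : c s(Sum.inl x.1, Sum.inr w) = b := by
        rw [← hxw, ← hxc, hxv, ← hxv]; exact hxb
      have cy1 : c s(Sum.inl y.1, Sum.inr v) = b := by rw [← hyv]; exact hyb
      have cy2 : c s(Sum.inl y.1, Sum.inr w) = b := by
        rw [← hyw, ← hyc, hyv, ← hyv]; exact hyb
      have cz1 : c s(Sum.inl z.1, Sum.inr v) = b := by rw [← hzv]; exact hzb
      have cz2 : c s(Sum.inl z.1, Sum.inr w) = b := by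
        rw [← hzw, ← hzc, hzv, ← hzv]; exact hzb
      fin_cases j <;> fin_cases i <;> simp_all
    calc T.card ≤ 2 * (T.image φ).card := Finset.card_le_mul_card_image T 2 hbound
      _ ≤ 2 * 288 := by
          have : (T.image φ).card ≤ Fintype.card (Fin 12 × Fin 12 × Bool) :=
            Finset.card_le_univ _
          simp at this
          omega
      _ = 576 := rfl
  omega
end

section
/- If G is a graph with chromatic number χ(G) ≤ 2ω(G) − 2, where ω(G) is the clique number, then G is clique-splittable: its vertex set can be partitioned into two sets V1, V2 such that the induced subgraphs G[V1] and G[V2] each have clique number strictly less than ω(G). -/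
open SimpleGraph

lemma aux_lt {V : Type*} [Fintype V] (G : SimpleGraph V) {k : ℕ}
    (h : G.CliqueFree k) : G.cliqueNum < k := by
  by_contra hle
  push_neg at hle
  obtain ⟨s, hs⟩ := G.exists_isNClique_cliqueNum
  exact (h.mono hle) s hs

/-- If `G` (with at least one edge) satisfies `χ(G) ≤ 2ω(G) − 2`, then `G` is
clique-splittable: its vertex set splits into two parts, each inducing a subgraph of
strictly smaller clique number. -/
theorem stmt10 {V : Type*} [Fintype V] (G : SimpleGraph V)
    (hedge : ∃ u v, G.Adj u v)
    (h : G.Colorable (2 * G.cliqueNum - 2)) :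
    ∃ S : Set V, (G.induce S).cliqueNum < G.cliqueNum ∧
      (G.induce Sᶜ).cliqueNum < G.cliqueNum := by
  classical
  obtain ⟨u, v, huv⟩ := hedge
  set k := G.cliqueNum with hk
  have hk2 : 2 ≤ k := by
    have hcl : G.IsNClique 2 ({u, v} : Finset V) := by
      rw [isNClique_iff]
      constructor
      · rw [Finset.coe_insert, Finset.coe_singleton]
        exact isClique_pair.mpr fun _ => huv
      · rw [Finset.card_insert_of_notMem (by simp [huv.ne]), Finset.card_singleton]
    have h2 := hcl.isClique.card_le_cliqueNum (t := {u, v})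
    rwa [hcl.card_eq] at h2
  obtain ⟨C⟩ := h
  refine ⟨{v | (C v : ℕ) < k - 1}, ?_, ?_⟩
  · have hcol : (G.induce {v | (C v : ℕ) < k - 1}).Colorable (k - 1) := by
      refine ⟨Coloring.mk (fun x => ⟨C x.1, x.2⟩) ?_⟩
      intro a b hab hcc
      simp only [Fin.mk.injEq] at hcc
      exact C.valid hab (Fin.ext hcc)
    exact aux_lt _ (hcol.cliqueFree (by omega))
  · have hcol : (G.induce {v | (C v : ℕ) < k - 1}ᶜ).Colorable (k - 1) := by
      refine ⟨Coloring.mk (fun x => ⟨(C x.1 : ℕ) - (k - 1), ?_⟩) ?_⟩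
      · have h1 : (C x.1 : ℕ) < 2 * k - 2 := (C x.1).2
        have h2 : ¬ (C x.1 : ℕ) < k - 1 := x.2
        omega
      · intro a b hab hcc
        have h2a : ¬ (C a.1 : ℕ) < k - 1 := a.2
        have h2b : ¬ (C b.1 : ℕ) < k - 1 := b.2
        simp only [Fin.mk.injEq] at hcc
        have hg : G.Adj a.1 b.1 := hab
        exact C.valid hg (Fin.ext (by omega))
    exact aux_lt _ (hcol.cliqueFree (by omega))
end

section
/- Let F be a 4-regular graph with girth at least m+1. Then every 2-coloring of the edges of F contains a monochromatic path P_m on m vertices. (Hence the path P_m has a Ramsey graph of maximum degree 4.) -/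
open SimpleGraph

/-- `getVert` agrees with indexing into the support list. -/
private lemma walk_support_get? {V : Type*} {G : SimpleGraph V} {u v : V} (p : G.Walk u v) :
    ∀ i, i ≤ p.length → p.support[i]? = some (p.getVert i) := by
  induction p with
  | nil => intro i hi; obtain rfl : i = 0 := Nat.le_zero.mp hi; rfl
  | cons h q ih =>
    intro i hi
    cases i with
    | zero => rfl
    | succ n =>
      have := ih n (by simpa [SimpleGraph.Walk.length_cons] using hi)
      simpa [SimpleGraph.Walk.support_cons] using this

/-- A graph in which every vertex has degree at least 2 contains a cycle. -/
private lemma exists_cycle_of_two_le_degree {V : Type*} [Fintype V] [Nonempty V]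
    (G : SimpleGraph V) [DecidableRel G.Adj]
    (hdeg : ∀ x : V, 2 ≤ G.degree x) :
    ∃ (v : V) (w : G.Walk v v), w.IsCycle := by
  classical
  set S : Set ℕ := {k | ∃ (a b : V) (p : G.Walk a b), p.IsPath ∧ p.length = k} with hS
  have hSne : S.Nonempty := by
    refine ⟨0, Classical.arbitrary V, Classical.arbitrary V, Walk.nil, ?_, rfl⟩
    exact Walk.IsPath.nil
  have hSbd : BddAbove S := by
    refine ⟨Fintype.card V, ?_⟩
    rintro k ⟨a, b, p, hp, rfl⟩
    exact hp.length_lt.le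
  obtain ⟨u, v0, p, hp, hplen⟩ := Nat.sSup_mem hSne hSbd
  have hmax : ∀ k ∈ S, k ≤ sSup S := fun k hk => le_csSup hSbd hk
  -- the endpoint v0 of the reversed walk
  set r := p.reverse with hrdef
  have hr : r.IsPath := hp.reverse
  have hrlen : r.length = sSup S := by simpa [hrdef] using hplen
  -- sSup S ≥ 1
  have hL1 : 1 ≤ sSup S := by
    obtain ⟨y, hy⟩ : ∃ y, G.Adj v0 y := by
      have h2 := hdeg v0
      have : (G.neighborFinset v0).Nonempty := by
        rw [← Finset.card_pos]; rw [G.card_neighborFinset_eq_degree] at *; omega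
      obtain ⟨y, hy⟩ := this
      exact ⟨y, (G.mem_neighborFinset v0 y).mp hy⟩
    have : (1 : ℕ) ∈ S := ⟨v0, y, Walk.cons hy Walk.nil, by
      rw [Walk.cons_isPath_iff]; exact ⟨Walk.IsPath.nil, by simp [hy.ne]⟩, rfl⟩
    exact hmax 1 this
  have hrnil : ¬ r.Nil := by rw [Walk.not_nil_iff_lt_length]; omega
  set x := r.getVert 1 with hxdef
  have hvx : G.Adj v0 x := r.adj_snd hrnil
  set q := r.tail with hqdef
  have hrq : Walk.cons hvx q = r := by
    simpa using r.cons_tail_eq hrnil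
  have hq : q.IsPath := hr.tail
  have hv0q : v0 ∉ q.support := by
    have := hr
    rw [← hrq, Walk.cons_isPath_iff] at this
    exact this.2
  -- a neighbor w of v0 different from x
  obtain ⟨w, hwmem, hwx⟩ : ∃ w ∈ G.neighborFinset v0, w ≠ x := by
    apply Finset.exists_mem_ne
    rw [G.card_neighborFinset_eq_degree]; have := hdeg v0; omega
  have hvw : G.Adj v0 w := (G.mem_neighborFinset v0 w).mp hwmem
  -- w must lie on r
  have hwr : w ∈ r.support := by
    by_contra hwr
    have hext : (Walk.cons hvw.symm r).IsPath := by
      rw [Walk.cons_isPath_iff]; exact ⟨hr, hwr⟩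
    have : r.length + 1 ∈ S := ⟨w, u, Walk.cons hvw.symm r, hext, by simp⟩
    have := hmax _ this
    omega
  have hwq : w ∈ q.support := by
    rw [← hrq, Walk.support_cons] at hwr
    rcases List.mem_cons.mp hwr with h | h
    · exact absurd h hvw.ne'
    · exact h
  -- build the cycle
  set d := q.takeUntil w hwq with hddef
  have hd : d.IsPath := hq.takeUntil hwq
  have hv0d : v0 ∉ d.support := fun hmem => hv0q (Walk.support_takeUntil_subset _ hwq hmem)
  have hp0 : (Walk.cons hvx d).IsPath := by
    rw [Walk.cons_isPath_iff]; exact ⟨hd, hv0d⟩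
  refine ⟨w, Walk.cons hvw.symm (Walk.cons hvx d), ?_⟩
  rw [Walk.cons_isCycle_iff]
  refine ⟨hp0, ?_⟩
  rw [Walk.edges_cons, List.mem_cons]
  rintro (h | h)
  · rw [Sym2.eq_iff] at h
    rcases h with ⟨h1, -⟩ | ⟨h1, h2⟩
    · exact hvw.ne' h1
    · exact hwx h1
  · exact hv0d (Walk.snd_mem_support_of_mem_edges d h)

/-- A graph with at least as many edges as vertices contains a cycle. -/
private lemma exists_cycle_of_card_le (n : ℕ) {V : Type*} [Fintype V] (G : SimpleGraph V)
    (hn : Fintype.card V ≤ n) (hne : Nonempty V)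
    (hcard : Fintype.card V ≤ G.edgeSet.ncard) :
    ∃ (v : V) (w : G.Walk v v), w.IsCycle := by
  classical
  induction n generalizing V with
  | zero => have : 0 < Fintype.card V := Fintype.card_pos; omega
  | succ n ih =>
    -- the vertex set has at least 2 elements
    have hVpos : 0 < Fintype.card V := Fintype.card_pos
    have hEne : G.edgeSet.Nonempty := by
      rw [← Set.ncard_pos (Set.toFinite _)]; omega
    obtain ⟨e, he⟩ := hEne
    have hV2 : 2 ≤ Fintype.card V := by
      induction e using Sym2.ind with
      | _ a b =>
        rw [SimpleGraph.mem_edgeSet] at he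
        exact Fintype.one_lt_card_iff_nontrivial.mpr ⟨a, b, he.ne⟩
    by_cases hmin : ∃ v, G.degree v ≤ 1
    · -- delete a low-degree vertex
      obtain ⟨v, hv⟩ := hmin
      set s : Set V := {v}ᶜ with hsdef
      have hcards : Fintype.card s = Fintype.card V - 1 := by
        have : Fintype.card s = Fintype.card {x : V // ¬ x = v} := by
          apply Fintype.card_congr
          exact Equiv.subtypeEquivRight (fun x => by simp [hsdef])
        rw [this, Fintype.card_subtype_compl, Fintype.card_subtype_eq]
      -- counting edges of the induced graph
      have hsub : (G.edgeSet \ G.incidenceSet v) ⊆ Sym2.map (Subtype.val) '' (G.induce s).edgeSet := by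
        rintro e ⟨heE, heI⟩
        induction e using Sym2.ind with
        | _ a b =>
          have hadj : G.Adj a b := (SimpleGraph.mem_edgeSet G).mp heE
          have hvnot : v ∉ s(a, b) := fun hvmem => heI ⟨heE, hvmem⟩
          rw [Sym2.mem_iff] at hvnot
          push_neg at hvnot
          have ha : a ∈ s := by
            simp only [hsdef, Set.mem_compl_iff, Set.mem_singleton_iff]
            exact fun h => hvnot.1 h.symm
          have hb : b ∈ s := by
            simp only [hsdef, Set.mem_compl_iff, Set.mem_singleton_iff]
            exact fun h => hvnot.2 h.symm
          refine ⟨s(⟨a, ha⟩, ⟨b, hb⟩), ?_, by simp⟩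
          rw [SimpleGraph.mem_edgeSet]
          simpa using hadj
      have hIcard : (G.incidenceSet v).ncard ≤ 1 := by
        have h1 : (G.incidenceSet v).ncard = G.degree v := by
          rw [Set.ncard_eq_toFinset_card', Set.toFinset_card]
          exact G.card_incidenceSet_eq_degree v
        omega
      have hdiff : Fintype.card V - 1 ≤ (G.edgeSet \ G.incidenceSet v).ncard := by
        rw [Set.ncard_diff (G.incidenceSet_subset v) (Set.toFinite _)]
        omega
      have himg : (G.edgeSet \ G.incidenceSet v).ncard ≤ (G.induce s).edgeSet.ncard := by
        calc (G.edgeSet \ G.incidenceSet v).ncard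
            ≤ (Sym2.map (Subtype.val) '' (G.induce s).edgeSet).ncard :=
              Set.ncard_le_ncard hsub (Set.Finite.image _ (Set.toFinite _))
          _ = (G.induce s).edgeSet.ncard :=
              Set.ncard_image_of_injective _ (Sym2.map.injective Subtype.val_injective)
      have hnes : Nonempty s := by
        rw [← Fintype.card_pos_iff, hcards]; omega
      have hcount : Fintype.card s ≤ (G.induce s).edgeSet.ncard := by omega
      obtain ⟨w, c, hc⟩ := ih (G.induce s) (by omega) hnes hcount
      refine ⟨w, c.map (SimpleGraph.Embedding.induce s (G:=G)).toHom, ?_⟩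
      exact hc.map (SimpleGraph.Embedding.induce s (G:=G)).injective
    · push_neg at hmin
      exact exists_cycle_of_two_le_degree G (fun x => by have := hmin x; omega)

/-- The subgraph of `F` consisting of the edges of color `b`. -/
private def monoSub {V : Type*} (F : SimpleGraph V) (c : Sym2 V → Bool) (b : Bool) :
    SimpleGraph V where
  Adj x y := F.Adj x y ∧ c s(x, y) = b
  symm := ⟨fun x y h => ⟨h.1.symm, by rw [Sym2.eq_swap]; exact h.2⟩⟩
  loopless := ⟨fun x h => F.loopless.irrefl x h.1⟩

private lemma monoSub_adj {V : Type*} (F : SimpleGraph V) (c : Sym2 V → Bool) (b : Bool)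
    (x y : V) : (monoSub F c b).Adj x y ↔ F.Adj x y ∧ c s(x, y) = b := Iff.rfl

/-- Every 2-coloring of the edges of a 4-regular graph of girth at least `m+1` contains
a monochromatic path on `m` vertices. -/
theorem stmt11 {V : Type*} [Fintype V] [Nonempty V]
    (F : SimpleGraph V) [DecidableRel F.Adj] (m : ℕ)
    (hreg : F.IsRegularOfDegree 4) (hg : (m + 1 : ℕ∞) ≤ F.girth) :
    Arrows F (SimpleGraph.pathGraph m) := by
  classical
  intro c
  set n := Fintype.card V with hn
  have hHle : ∀ b, monoSub F c b ≤ F := fun b x y h => h.1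
  -- the edges split by color
  have hsplit : F.edgeSet = (monoSub F c true).edgeSet ∪ (monoSub F c false).edgeSet := by
    ext e
    induction e using Sym2.ind with
    | _ a b =>
      simp only [Set.mem_union, mem_edgeSet, monoSub_adj]
      cases h : c s(a, b) <;> tauto
  have hdisj : Disjoint (monoSub F c true).edgeSet (monoSub F c false).edgeSet := by
    rw [Set.disjoint_left]
    intro e he1 he2
    induction e using Sym2.ind with
    | _ a b =>
      rw [mem_edgeSet, monoSub_adj] at he1 he2
      exact absurd (he1.2.symm.trans he2.2) (by simp)
  -- counting edges
  have hFE : F.edgeSet.ncard = 2 * n := by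
    have h1 := F.sum_degrees_eq_twice_card_edges
    have h2 : ∑ v : V, F.degree v = 4 * n := by
      rw [Finset.sum_congr rfl (fun v _ => hreg v), Finset.sum_const, smul_eq_mul,
        Finset.card_univ, mul_comm, hn]
    have h3 : F.edgeFinset.card = F.edgeSet.ncard := by
      rw [← coe_edgeFinset, Set.ncard_coe_finset]
    omega
  have hbex : ∃ b, n ≤ (monoSub F c b).edgeSet.ncard := by
    by_contra hcon
    push_neg at hcon
    have h1 := hcon true
    have h2 := hcon false
    have h3 := Set.ncard_union_eq hdisj (Set.toFinite _) (Set.toFinite _)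
    rw [← hsplit, hFE] at h3
    omega
  obtain ⟨b, hb⟩ := hbex
  -- a monochromatic cycle
  obtain ⟨v, w, hw⟩ := exists_cycle_of_card_le n (monoSub F c b) le_rfl ‹Nonempty V›
    (by rw [← hn]; exact hb)
  -- its length is at least m + 1
  have hcyF : (w.mapLe (hHle b)).IsCycle := hw.mapLe (hHle b)
  have hna : ¬ F.IsAcyclic := fun h => h _ hcyF
  have hg1 : F.egirth ≤ (w.mapLe (hHle b)).length := le_egirth.mp le_rfl _ _ hcyF
  have hg2 : (↑F.girth : ℕ∞) = F.egirth := ENat.coe_toNat (by rwa [Ne, egirth_eq_top])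
  have hmw : m + 1 ≤ w.length := by
    have h2 : ((m : ℕ∞) + 1) ≤ ((w.mapLe (hHle b)).length : ℕ∞) :=
      le_trans (by rw [hg2] at hg; exact hg) hg1
    have h3 : (w.mapLe (hHle b)).length = w.length := by
      simp [SimpleGraph.Walk.mapLe]
    rw [h3] at h2
    exact_mod_cast h2
  -- build the path
  set f : Fin m → V := fun i => w.getVert (i.val + 1) with hf
  have htl : w.support.tail.length = w.length := by
    rw [List.length_tail, w.length_support]
    omega
  have key : ∀ i : ℕ, i < m → w.support.tail[i]? = some (w.getVert (i + 1)) := by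
    intro i hi
    have h1 := walk_support_get? w (i + 1) (by omega)
    rw [w.support_eq_cons] at h1
    simpa using h1
  have hinj : Function.Injective f := by
    intro i j hij
    have h1 := key i i.isLt
    have h2 := key j j.isLt
    apply Fin.ext
    refine (List.getElem?_inj (i := (i : ℕ)) (by rw [htl]; omega) hw.support_nodup).mp ?_
    rw [h1, h2]
    simpa [hf] using hij
  refine ⟨b, f, hinj, ?_⟩
  intro a a' hadj
  rcases pathGraph_adj.mp hadj with h | h
  · have hlt : (a : ℕ) + 1 < w.length := by have := a'.isLt; omega
    have hw1 := w.adj_getVert_succ hlt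
    rw [monoSub_adj] at hw1
    have hee : (a' : ℕ) + 1 = (a : ℕ) + 1 + 1 := by omega
    constructor
    · show F.Adj (w.getVert ((a : ℕ) + 1)) (w.getVert ((a' : ℕ) + 1))
      rw [hee]; exact hw1.1
    · show c s(w.getVert ((a : ℕ) + 1), w.getVert ((a' : ℕ) + 1)) = b
      rw [hee]; exact hw1.2
  · have hlt : (a' : ℕ) + 1 < w.length := by have := a.isLt; omega
    have hw1 := w.adj_getVert_succ hlt
    rw [monoSub_adj] at hw1
    have hee : (a : ℕ) + 1 = (a' : ℕ) + 1 + 1 := by omega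
    constructor
    · show F.Adj (w.getVert ((a : ℕ) + 1)) (w.getVert ((a' : ℕ) + 1))
      rw [hee]; exact hw1.1.symm
    · show c s(w.getVert ((a : ℕ) + 1), w.getVert ((a' : ℕ) + 1)) = b
      rw [hee, Sym2.eq_swap]; exact hw1.2
end

section
/- If an edge-transitive graph H is Ramsey equivalent to a graph G, and Γ is a minimal Ramsey graph for H, then for every edge e of Γ and every proper subgraph H' of H, the graph Γ − e is a Ramsey graph for H' but not for H. Consequently, an edge-transitive graph H is not Ramsey equivalent to any of its proper subgraphs. -/
open SimpleGraph

/-- Let `H` be edge-transitive and `Γ` a minimal Ramsey graph for `H`. Then for every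
edge `e` of `Γ` and every proper subgraph `H'` of `H`, the graph `Γ − e` arrows `H'`
but does not arrow `H`; consequently `H` is not Ramsey equivalent to any of its proper
subgraphs. -/
theorem stmt14 {V W : Type*} (H : SimpleGraph W) (Γ : SimpleGraph V)
    (hET : ∀ e ∈ H.edgeSet, ∀ e' ∈ H.edgeSet, ∃ φ : H ≃g H, Sym2.map ⇑φ e = e')
    (hΓ : Arrows Γ H)
    (hmin : ∀ Γ'' : SimpleGraph V, Γ'' < Γ → ¬ Arrows Γ'' H)
    (e : Sym2 V) (he : e ∈ Γ.edgeSet)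
    (H' : SimpleGraph W) (hH' : H' < H) :
    Arrows (Γ.deleteEdges {e}) H' ∧ ¬ Arrows (Γ.deleteEdges {e}) H := by
  have hlt : Γ.deleteEdges {e} < Γ := by
    refine lt_of_le_of_ne (SimpleGraph.deleteEdges_le _) fun h => ?_
    have : e ∈ (Γ.deleteEdges {e}).edgeSet := by rw [h]; exact he
    rw [SimpleGraph.edgeSet_deleteEdges] at this
    exact this.2 rfl
  refine ⟨?_, hmin _ hlt⟩
  intro c
  obtain ⟨b, f, hf, hmono⟩ := hΓ c
  obtain ⟨u, v, huv, huv'⟩ : ∃ u v, H.Adj u v ∧ ¬ H'.Adj u v := by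
    by_contra hcon
    push_neg at hcon
    exact hH'.2 fun a a' h => hcon a a' h
  by_cases hcase : ∃ x y, H.Adj x y ∧ s(f x, f y) = e
  · obtain ⟨x, y, hxy, hxye⟩ := hcase
    obtain ⟨φ, hφ⟩ := hET s(u, v) huv s(x, y) hxy
    refine ⟨b, f ∘ ⇑φ, hf.comp φ.injective, fun a a' ha => ?_⟩
    have haH : H.Adj (φ a) (φ a') := φ.map_adj_iff.2 (hH'.1 _ _ ha)
    obtain ⟨hΓadj, hc⟩ := hmono _ _ haH
    refine ⟨SimpleGraph.deleteEdges_adj.2 ⟨hΓadj, fun hmem => ?_⟩, hc⟩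
    have h1 : s(f (φ a), f (φ a')) = s(f x, f y) := by
      simp only [Set.mem_singleton_iff, Function.comp_apply] at hmem
      rw [hmem, hxye]
    have h2 : s(φ a, φ a') = s(x, y) := Sym2.map.injective hf (by simpa using h1)
    have h3 : Sym2.map ⇑φ s(a, a') = Sym2.map ⇑φ s(u, v) := by
      simpa [hφ] using h2
    have h4 : s(a, a') = s(u, v) := Sym2.map.injective φ.injective h3
    rw [Sym2.eq_iff] at h4
    rcases h4 with ⟨rfl, rfl⟩ | ⟨rfl, rfl⟩
    · exact huv' ha
    · exact huv' ha.symm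
  · push_neg at hcase
    refine ⟨b, f, hf, fun a a' ha => ?_⟩
    obtain ⟨hΓadj, hc⟩ := hmono a a' (hH'.1 _ _ ha)
    exact ⟨SimpleGraph.deleteEdges_adj.2 ⟨hΓadj, fun hmem =>
      hcase a a' (hH'.1 _ _ ha) (Set.mem_singleton_iff.1 hmem)⟩, hc⟩
end

section
/- Let G be a complete graph K_{2Δ+1} with Δ ≥ 3, and let H be the graph obtained from the star K_{1,Δ} by adding an edge between two leaves (so Δ(H) = Δ and H is not bipartite). Then every 2-coloring of the edges of K_{2Δ+1} contains a monochromatic copy of H. -/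
open SimpleGraph

/-- The graph obtained from the star `K_{1,d}` (center `0`, leaves `1,…,d`) by adding the
edge between the leaves `1` and `2`. -/
def starPlus (d : ℕ) : SimpleGraph (Fin (d + 1)) :=
  SimpleGraph.fromEdgeSet ({e | (0 : Fin (d + 1)) ∈ e} ∪ {s(1, 2)})

namespace Stmt16Aux

def nbhd {n : ℕ} (c : Sym2 (Fin n) → Bool) (v : Fin n) (b : Bool) : Finset (Fin n) :=
  Finset.univ.filter (fun w => w ≠ v ∧ c s(v, w) = b)

lemma mem_nbhd {n : ℕ} {c : Sym2 (Fin n) → Bool} {v w : Fin n} {b : Bool} :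
    w ∈ nbhd c v b ↔ w ≠ v ∧ c s(v, w) = b := by
  simp [nbhd]

lemma nbhd_card {d : ℕ} (c : Sym2 (Fin (2*d+1)) → Bool) (v : Fin (2*d+1)) (b : Bool) :
    2*d ≤ (nbhd c v b).card + (nbhd c v (!b)).card := by
  have hsub : Finset.univ.erase v ⊆ nbhd c v b ∪ nbhd c v (!b) := by
    intro w hw
    have hwv : w ≠ v := Finset.ne_of_mem_erase hw
    by_cases h : c s(v, w) = b
    · exact Finset.mem_union_left _ (mem_nbhd.mpr ⟨hwv, h⟩)
    · refine Finset.mem_union_right _ (mem_nbhd.mpr ⟨hwv, ?_⟩)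
      cases b <;> simp_all
  have h1 : (Finset.univ.erase v).card = 2*d := by
    rw [Finset.card_erase_of_mem (Finset.mem_univ v)]
    simp
  calc 2*d = (Finset.univ.erase v).card := h1.symm
    _ ≤ (nbhd c v b ∪ nbhd c v (!b)).card := Finset.card_le_card hsub
    _ ≤ _ := Finset.card_union_le _ _

lemma starPlus_adj_cases {d : ℕ} {a b : Fin (d+1)} (h : (starPlus d).Adj a b) :
    a ≠ b ∧ (a = 0 ∨ b = 0 ∨ s(a, b) = s(1, 2)) := by
  rw [starPlus, fromEdgeSet_adj] at h
  refine ⟨h.2, ?_⟩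
  rcases h.1 with h | h
  · rcases Sym2.mem_iff.mp h with h | h
    · exact Or.inl h.symm
    · exact Or.inr (Or.inl h.symm)
  · exact Or.inr (Or.inr h)

lemma build {d : ℕ} (hd : 3 ≤ d) (c : Sym2 (Fin (2*d+1)) → Bool) (b : Bool)
    (v x y : Fin (2*d+1)) (hxy : x ≠ y)
    (hx : x ∈ nbhd c v b) (hy : y ∈ nbhd c v b)
    (hcxy : c s(x, y) = b) (hdeg : d ≤ (nbhd c v b).card) :
    IsMonoCopyIn (starPlus d) (⊤ : SimpleGraph (Fin (2*d+1))) c b := by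
  have hpair : ({x, y} : Finset (Fin (2*d+1))) ⊆ nbhd c v b := by
    intro z hz; rcases Finset.mem_insert.mp hz with rfl | hz
    · exact hx
    · rw [Finset.mem_singleton.mp hz]; exact hy
  have hpc : ({x, y} : Finset (Fin (2*d+1))).card = 2 := Finset.card_pair hxy
  obtain ⟨S, hpS, hSN, hSc⟩ := Finset.exists_subsuperset_card_eq
    (n := d - 2 + ({x, y} : Finset (Fin (2*d+1))).card) hpair (by omega) (by rw [hpc]; omega)
  rw [hpc] at hSc
  have hScard : S.card = d := by omega
  have hxS : x ∈ S := hpS (by simp)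
  have hyS : y ∈ S := hpS (by simp)
  have hvS : v ∉ S := fun h => (mem_nbhd.mp (hSN h)).1 rfl
  set T : Finset (Fin (2*d+1)) := S \ {x, y} with hTdef
  have hT : T.card = d - 2 := by
    rw [hTdef, Finset.card_sdiff_of_subset hpS, hScard, hpc]
  have hTS : T ⊆ S := Finset.sdiff_subset
  have hxT : x ∉ T := by simp [hTdef]
  have hyT : y ∉ T := by simp [hTdef]
  set g : ℕ → Fin (2*d+1) := fun k => if hk : k < T.card then (T.equivFin.symm ⟨k, hk⟩ : Fin (2*d+1)) else v with hgdef
  have hgT : ∀ k, k < T.card → g k ∈ T := by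
    intro k hk; simp only [hgdef, dif_pos hk]; exact (T.equivFin.symm ⟨k, hk⟩).2
  have hginj : ∀ k k', k < T.card → k' < T.card → g k = g k' → k = k' := by
    intro k k' hk hk' h
    simp only [hgdef, dif_pos hk, dif_pos hk'] at h
    exact congrArg Fin.val (T.equivFin.symm.injective (Subtype.ext h))
  set f : Fin (d+1) → Fin (2*d+1) := fun i =>
    if i.val = 0 then v else if i.val = 1 then x else if i.val = 2 then y else g (i.val - 3) with hfdef
  have hfval : ∀ i : Fin (d+1),
      (i.val = 0 → f i = v) ∧ (i.val = 1 → f i = x) ∧ (i.val = 2 → f i = y) ∧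
      (3 ≤ i.val → f i = g (i.val - 3)) := by
    intro i
    refine ⟨fun h => ?_, fun h => ?_, fun h => ?_, fun h => ?_⟩
    · simp only [hfdef]; rw [if_pos h]
    · simp only [hfdef]; rw [if_neg (by omega), if_pos h]
    · simp only [hfdef]; rw [if_neg (by omega), if_neg (by omega), if_pos h]
    · simp only [hfdef]; rw [if_neg (by omega), if_neg (by omega), if_neg (by omega)]
  have hfS : ∀ i : Fin (d+1), i.val ≠ 0 → f i ∈ S := by
    intro i h0
    obtain ⟨hi0, hi1, hi2, hi3⟩ := hfval i
    have hi := i.isLt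
    rcases (by omega : i.val = 1 ∨ i.val = 2 ∨ 3 ≤ i.val) with h | h | h
    · rw [hi1 h]; exact hxS
    · rw [hi2 h]; exact hyS
    · rw [hi3 h]; exact hTS (hgT _ (by rw [hT]; omega))
  have hfinj : Function.Injective f := by
    intro i j h
    have hi := i.isLt
    have hj := j.isLt
    obtain ⟨hi0, hi1, hi2, hi3⟩ := hfval i
    obtain ⟨hj0, hj1, hj2, hj3⟩ := hfval j
    rcases (by omega : i.val = 0 ∨ i.val = 1 ∨ i.val = 2 ∨ 3 ≤ i.val) with h1 | h1 | h1 | h1 <;>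
      rcases (by omega : j.val = 0 ∨ j.val = 1 ∨ j.val = 2 ∨ 3 ≤ j.val) with h2 | h2 | h2 | h2 <;>
      [rw [hi0 h1, hj0 h2] at h; rw [hi0 h1, hj1 h2] at h; rw [hi0 h1, hj2 h2] at h;
       rw [hi0 h1, hj3 h2] at h; rw [hi1 h1, hj0 h2] at h; rw [hi1 h1, hj1 h2] at h;
       rw [hi1 h1, hj2 h2] at h; rw [hi1 h1, hj3 h2] at h; rw [hi2 h1, hj0 h2] at h;
       rw [hi2 h1, hj1 h2] at h; rw [hi2 h1, hj2 h2] at h; rw [hi2 h1, hj3 h2] at h;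
       rw [hi3 h1, hj0 h2] at h; rw [hi3 h1, hj1 h2] at h; rw [hi3 h1, hj2 h2] at h;
       rw [hi3 h1, hj3 h2] at h] <;>
    first
      | exact Fin.ext (by omega)
      | exact Fin.ext (by
          have h3 := hginj _ _ (by rw [hT]; omega) (by rw [hT]; omega) h; omega)
      | exact absurd h hxy
      | exact absurd h.symm hxy
      | (exfalso; apply hvS
         first
           | (rw [h]; first
               | exact hxS
               | exact hyS
               | exact hTS (hgT _ (by rw [hT]; omega)))
           | (rw [← h]; first
               | exact hxS
               | exact hyS
               | exact hTS (hgT _ (by rw [hT]; omega))))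
      | (exfalso; apply hxT
         first
           | (rw [h]; exact hgT _ (by rw [hT]; omega))
           | (rw [← h]; exact hgT _ (by rw [hT]; omega)))
      | (exfalso; apply hyT
         first
           | (rw [h]; exact hgT _ (by rw [hT]; omega))
           | (rw [← h]; exact hgT _ (by rw [hT]; omega)))
  have hcS : ∀ w ∈ S, c s(v, w) = b := fun w hw => (mem_nbhd.mp (hSN hw)).2
  have hf0 : f 0 = v := (hfval 0).1 rfl
  have hv1 : ((1 : Fin (d+1)) : ℕ) = 1 := by
    have : (1 : ℕ) < d + 1 := by omega
    simp [Fin.val_one']; omega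
  have hv2 : ((2 : Fin (d+1)) : ℕ) = 2 := by
    have h2 : ((2 : Fin (d+1)) : ℕ) = 2 % (d+1) := by
      rfl
    rw [h2, Nat.mod_eq_of_lt (by omega)]
  have hf1 : f 1 = x := (hfval 1).2.1 hv1
  have hf2 : f 2 = y := (hfval 2).2.2.1 hv2
  refine ⟨f, hfinj, ?_⟩
  intro a a' hadj
  obtain ⟨hne, hcase⟩ := starPlus_adj_cases hadj
  have hfne : f a ≠ f a' := fun h => hne (hfinj h)
  refine ⟨by simpa using hfne, ?_⟩
  rcases hcase with rfl | h | h
  · have ha' : a'.val ≠ 0 := fun h0 => hne (Fin.ext (by simp [h0]))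
    rw [hf0]
    exact hcS _ (hfS a' ha')
  · subst h
    have ha : a.val ≠ 0 := fun h0 => hne (Fin.ext (by simp [h0]))
    rw [hf0, Sym2.eq_swap]
    exact hcS _ (hfS a ha)
  · rcases Sym2.eq_iff.mp h with ⟨rfl, rfl⟩ | ⟨rfl, rfl⟩
    · rw [hf1, hf2]; exact hcxy
    · rw [hf1, hf2, Sym2.eq_swap]; exact hcxy

end Stmt16Aux

open Stmt16Aux

/-- For `d ≥ 3`, every 2-coloring of the edges of `K_{2d+1}` contains a monochromatic
copy of the star `K_{1,d}` with one extra edge between two leaves. -/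
theorem stmt16 (d : ℕ) (hd : 3 ≤ d) :
    Arrows (⊤ : SimpleGraph (Fin (2 * d + 1))) (starPlus d) := by
  intro c
  -- From any monochromatic triangle we can produce a monochromatic copy.
  have key : ∀ (b : Bool) (v x y : Fin (2*d+1)), x ≠ y → x ∈ nbhd c v b → y ∈ nbhd c v b →
      c s(x, y) = b → ∃ b', IsMonoCopyIn (starPlus d) (⊤ : SimpleGraph (Fin (2*d+1))) c b' := by
    intro b v x y hxy hx hy hcxy
    by_cases hdeg : d ≤ (nbhd c v b).card
    · exact ⟨b, build hd c b v x y hxy hx hy hcxy hdeg⟩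
    · have hsum := nbhd_card c v b
      have hdeg' : d + 1 ≤ (nbhd c v (!b)).card := by omega
      by_cases hin : ∃ p ∈ nbhd c v (!b), ∃ q ∈ nbhd c v (!b), p ≠ q ∧ c s(p, q) = !b
      · obtain ⟨p, hp, q, hq, hpq, hc⟩ := hin
        exact ⟨!b, build hd c (!b) v p q hpq hp hq hc (by omega)⟩
      · push_neg at hin
        obtain ⟨t, hts, htc⟩ := Finset.exists_subset_card_eq
          (show 3 ≤ (nbhd c v (!b)).card by omega)
        obtain ⟨w, p, q, hwp, hwq, hpq, rfl⟩ := Finset.card_eq_three.mp htc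
        have hw : w ∈ nbhd c v (!b) := hts (by simp)
        have hp : p ∈ nbhd c v (!b) := hts (by simp)
        have hq : q ∈ nbhd c v (!b) := hts (by simp)
        have hcol : ∀ z1 ∈ nbhd c v (!b), ∀ z2 ∈ nbhd c v (!b), z1 ≠ z2 → c s(z1, z2) = b := by
          intro z1 h1 z2 h2 hne
          have h3 := hin z1 h1 z2 h2 hne
          cases b <;> simp_all
        have hsubw : ∀ z ∈ nbhd c v (!b), z ≠ w → z ∈ nbhd c w b := by
          intro z hz hzw
          exact mem_nbhd.mpr ⟨hzw, by
            have := hcol w hw z hz (fun h => hzw h.symm)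
            exact this⟩
        have hdegw : d ≤ (nbhd c w b).card := by
          have hsub2 : (nbhd c v (!b)).erase w ⊆ nbhd c w b := fun z hz =>
            hsubw z (Finset.mem_of_mem_erase hz) (Finset.ne_of_mem_erase hz)
          have h4 := Finset.card_le_card hsub2
          rw [Finset.card_erase_of_mem hw] at h4
          omega
        exact ⟨b, build hd c b w p q hpq (hsubw p hp (fun h => hwp h.symm))
          (hsubw q hq (fun h => hwq h.symm)) (hcol p hp q hq hpq) hdegw⟩
  -- Find a monochromatic triangle.
  obtain ⟨b0, hb0⟩ : ∃ b0, d ≤ (nbhd c 0 b0).card := by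
    by_contra hcon
    push_neg at hcon
    have h1 := hcon true
    have h2 := hcon false
    have h3 := nbhd_card c 0 true
    simp only [Bool.not_true] at h3
    omega
  by_cases hin : ∃ x ∈ nbhd c 0 b0, ∃ y ∈ nbhd c 0 b0, x ≠ y ∧ c s(x, y) = b0
  · obtain ⟨x, hx, y, hy, hxy, hc⟩ := hin
    exact key b0 0 x y hxy hx hy hc
  · push_neg at hin
    obtain ⟨t, hts, htc⟩ := Finset.exists_subset_card_eq
      (show 3 ≤ (nbhd c 0 b0).card by omega)
    obtain ⟨w, p, q, hwp, hwq, hpq, rfl⟩ := Finset.card_eq_three.mp htc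
    have hw : w ∈ nbhd c 0 b0 := hts (by simp)
    have hp : p ∈ nbhd c 0 b0 := hts (by simp)
    have hq : q ∈ nbhd c 0 b0 := hts (by simp)
    have hcol : ∀ z1 ∈ nbhd c 0 b0, ∀ z2 ∈ nbhd c 0 b0, z1 ≠ z2 → c s(z1, z2) = !b0 := by
      intro z1 h1 z2 h2 hne
      have h3 := hin z1 h1 z2 h2 hne
      cases b0 <;> simp_all
    exact key (!b0) w p q hpq
      (mem_nbhd.mpr ⟨fun h => hwp h.symm, hcol w hw p hp hwp⟩)
      (mem_nbhd.mpr ⟨fun h => hwq h.symm, hcol w hw q hq hwq⟩)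
      (hcol p hp q hq hpq)
end
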